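/- Let α : ℝ² → ℝ be convex and positively homogeneous of degree 1 (α(sp) = s·α(p) for all s > 0 and p) with α(p) > 0 for every p ≠ 0. Fix t > 0 and define u(x) := sup_{|p| ≤ 1} (x·p − t·α(p)) − 1 for x ∈ ℝ². Then u(x) = 0 if and only if there exist p ∈ ℝ² with |p| = 1 and a subgradient q of α at p such that x = p + t·q. -/

import Mathlib

open scoped RealInnerProductSpace

/-- `q` is a subgradient of `F` at `p`. -/
def IsSubgradient {n : ℕ} (F : EuclideanSpace ℝ (Fin n) → ℝ)
    (p q : EuclideanSpace ℝ (Fin n)) : Prop :=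
  ∀ y, F y ≥ F p + ⟪q, y - p⟫

lemma subgrad_exists {n : ℕ} (g : EuclideanSpace ℝ (Fin n) → ℝ)
    (hg : ConvexOn ℝ Set.univ g) (hc : Continuous g) (p : EuclideanSpace ℝ (Fin n)) :
    ∃ w, ∀ y, g p + ⟪w, y - p⟫ ≤ g y := by
  set S : Set (EuclideanSpace ℝ (Fin n) × ℝ) := {z | g z.1 < z.2} with hS
  have hopen : IsOpen S := isOpen_lt (hc.comp continuous_fst) continuous_snd
  have hconvS : Convex ℝ S := by
    rintro z1 h1 z2 h2 a b ha hb hab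
    simp only [hS, Set.mem_setOf_eq] at h1 h2 ⊢
    have hle := hg.2 (Set.mem_univ z1.1) (Set.mem_univ z2.1) ha hb hab
    simp only [smul_eq_mul] at hle
    have key : a * g z1.1 + b * g z2.1 < a * z1.2 + b * z2.2 := by
      rcases eq_or_lt_of_le ha with h | h
      · have hb1 : b = 1 := by linarith
        rw [← h, hb1]; simpa using h2
      · have h1' : a * g z1.1 < a * z1.2 := (mul_lt_mul_iff_right₀ h).mpr h1
        have h2' : b * g z2.1 ≤ b * z2.2 := mul_le_mul_of_nonneg_left h2.le hb
        linarith
    calc g (a • z1 + b • z2).1 = g (a • z1.1 + b • z2.1) := rfl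
      _ ≤ a * g z1.1 + b * g z2.1 := by simpa using hle
      _ < a * z1.2 + b * z2.2 := key
      _ = (a • z1 + b • z2).2 := by simp
  have hnot : (p, g p) ∉ S := by simp [hS]
  obtain ⟨f, hf⟩ := geometric_hahn_banach_open_point hconvS hopen hnot
  set c : ℝ := f (0, 1) with hc'
  have hdecomp : ∀ (y : EuclideanSpace ℝ (Fin n)) (r : ℝ), f (y, r) = f (y, 0) + r * c := by
    intro y r
    have h : (y, r) = (y, (0:ℝ)) + r • ((0 : EuclideanSpace ℝ (Fin n)), (1:ℝ)) := by
      simp [Prod.ext_iff]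
    rw [h, map_add, map_smul]
    simp [hc', smul_eq_mul]
  have hcneg : c < 0 := by
    have h1 : f (p, g p + 1) < f (p, g p) := hf _ (by simp only [hS, Set.mem_setOf_eq]; linarith)
    rw [hdecomp p (g p + 1), hdecomp p (g p)] at h1
    nlinarith
  have key : ∀ y, f (y, 0) + g y * c ≤ f (p, 0) + g p * c := by
    intro y
    apply le_of_forall_pos_le_add
    intro ε hε
    have hε' : 0 < ε / (-c) := div_pos hε (by linarith)
    have h1 : f (y, g y + ε / (-c)) < f (p, g p) :=
      hf _ (by simp only [hS, Set.mem_setOf_eq]; linarith)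
    rw [hdecomp y _, hdecomp p (g p)] at h1
    have h2 : (g y + ε / (-c)) * c = g y * c - ε := by
      have hcne : c ≠ 0 := ne_of_lt hcneg
      rw [div_neg, add_mul, neg_mul, div_mul_cancel₀ _ hcne]; ring
    rw [h2] at h1
    linarith
  set ψ := f.comp (ContinuousLinearMap.inl ℝ (EuclideanSpace ℝ (Fin n)) ℝ) with hψ
  refine ⟨(-c)⁻¹ • (InnerProductSpace.toDual ℝ _).symm ψ, fun y => ?_⟩
  have hw : ∀ z, ⟪(-c)⁻¹ • (InnerProductSpace.toDual ℝ (EuclideanSpace ℝ (Fin n))).symm ψ, z⟫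
      = (-c)⁻¹ * f (z, 0) := by
    intro z
    rw [real_inner_smul_left, InnerProductSpace.toDual_symm_apply]
    rfl
  have h2 : ⟪(-c)⁻¹ • (InnerProductSpace.toDual ℝ (EuclideanSpace ℝ (Fin n))).symm ψ, y - p⟫
      = (-c)⁻¹ * (f (y, 0) - f (p, 0)) := by
    rw [inner_sub_right, hw, hw]; ring
  rw [h2]
  have hkey := key y
  have hcpos : 0 < -c := by linarith
  have h3 : f (y, 0) - f (p, 0) ≤ (g y - g p) * (-c) := by nlinarith
  have h4 : (-c)⁻¹ * (f (y, 0) - f (p, 0)) ≤ g y - g p := by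
    have h5 := mul_le_mul_of_nonneg_left h3 (inv_nonneg.mpr hcpos.le)
    have h6 : (-c)⁻¹ * ((g y - g p) * (-c)) = g y - g p := by
      rw [mul_comm, mul_assoc, mul_inv_cancel₀ hcpos.ne', mul_one]
    linarith
  linarith

lemma inner_eq_hom {n : ℕ} (g : EuclideanSpace ℝ (Fin n) → ℝ)
    (hhom : ∀ s : ℝ, 0 < s → ∀ y, g (s • y) = s * g y)
    {p w : EuclideanSpace ℝ (Fin n)} (hw : ∀ y, g p + ⟪w, y - p⟫ ≤ g y) : ⟪w, p⟫ = g p := by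
  have h1 := hw ((2:ℝ) • p)
  have h2 := hw ((2⁻¹:ℝ) • p)
  rw [hhom 2 two_pos] at h1
  rw [hhom 2⁻¹ (by norm_num)] at h2
  have e1 : (2:ℝ) • p - p = p := by rw [two_smul]; abel
  have e2 : (2⁻¹:ℝ) • p - p = ((2⁻¹:ℝ) - 1) • p := by rw [sub_smul, one_smul]
  rw [e1] at h1
  rw [e2, real_inner_smul_right] at h2
  have : ((2⁻¹:ℝ) - 1) = -2⁻¹ := by norm_num
  rw [this] at h2
  linarith

/-- Let `α : ℝ² → ℝ` be convex, positively homogeneous of degree one,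
and positive away from `0`.  Fix `t > 0` and set
`u(x) = sup_{|p| ≤ 1} (x·p − t α(p)) − 1`.  Then `u(x) = 0` iff `x = p + t q` for
some unit vector `p` and some subgradient `q` of `α` at `p`. -/
theorem statement10 (α : EuclideanSpace ℝ (Fin 2) → ℝ)
    (hconv : ConvexOn ℝ Set.univ α)
    (hhom : ∀ s : ℝ, 0 < s → ∀ p, α (s • p) = s * α p)
    (hpos : ∀ p : EuclideanSpace ℝ (Fin 2), p ≠ 0 → 0 < α p)
    (t : ℝ) (ht : 0 < t) (x : EuclideanSpace ℝ (Fin 2)) :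
    (sSup {y : ℝ | ∃ p : EuclideanSpace ℝ (Fin 2), ‖p‖ ≤ 1 ∧ ⟪x, p⟫ - t * α p = y}
        - 1 = 0) ↔
      ∃ p q : EuclideanSpace ℝ (Fin 2),
        ‖p‖ = 1 ∧ IsSubgradient α p q ∧ x = p + t • q := by
  have hα0 : α 0 = 0 := by
    have h := hhom 2 two_pos 0
    rw [smul_zero] at h
    linarith
  rw [sub_eq_zero]
  set S := {y : ℝ | ∃ p : EuclideanSpace ℝ (Fin 2), ‖p‖ ≤ 1 ∧ ⟪x, p⟫ - t * α p = y}
    with hSdef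
  constructor
  · -- hard direction
    intro hsup
    have hcont : Continuous α := by
      rw [← continuousOn_univ]
      exact hconv.continuousOn isOpen_univ
    set g : EuclideanSpace ℝ (Fin 2) → ℝ := fun y => t * α y - ⟪x, y⟫ with hg
    have hgconv : ConvexOn ℝ Set.univ g := by
      refine ⟨convex_univ, fun y _ z _ a b ha hb hab => ?_⟩
      have h1 := hconv.2 (Set.mem_univ y) (Set.mem_univ z) ha hb hab
      simp only [smul_eq_mul] at h1 ⊢
      have h2 : ⟪x, a • y + b • z⟫ = a * ⟪x, y⟫ + b * ⟪x, z⟫ := by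
        rw [inner_add_right, real_inner_smul_right, real_inner_smul_right]
      simp only [hg]
      rw [h2]
      nlinarith [mul_le_mul_of_nonneg_left h1 ht.le]
    have hgcont : Continuous g :=
      (continuous_const.mul hcont).sub (Continuous.inner continuous_const continuous_id)
    have hghom : ∀ s : ℝ, 0 < s → ∀ y, g (s • y) = s * g y := by
      intro s hs y
      simp only [hg]
      rw [hhom s hs, real_inner_smul_right]; ring
    set C := {v : EuclideanSpace ℝ (Fin 2) | ∀ y, ⟪x, y⟫ - t * α y ≤ ⟪v, y⟫} with hC
    obtain ⟨w0, hw0⟩ := subgrad_exists g hgconv hgcont 0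
    have hw0' : -w0 ∈ C := by
      intro y
      have h1 := hw0 y
      rw [sub_zero] at h1
      have hg0 : g 0 = 0 := by simp [hg, hα0]
      rw [hg0, zero_add] at h1
      rw [inner_neg_left]
      simp only [hg] at h1
      linarith
    have hSb : ∀ v ∈ C, ∀ y ∈ S, y ≤ ‖v‖ := by
      rintro v hv y ⟨p', hp', rfl⟩
      have h1 := hv p'
      have h2 : ⟪v, p'⟫ ≤ ‖v‖ * ‖p'‖ := real_inner_le_norm v p'
      have h3 : ‖v‖ * ‖p'‖ ≤ ‖v‖ := mul_le_of_le_one_right (norm_nonneg v) hp'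
      linarith
    have h0S : (0:ℝ) ∈ S := ⟨0, by simp [hα0]⟩
    have hbdd : BddAbove S := ⟨‖-w0‖, fun y hy => hSb _ hw0' y hy⟩
    have hnormge : ∀ v ∈ C, 1 ≤ ‖v‖ := fun v hv =>
      hsup ▸ csSup_le ⟨0, h0S⟩ (hSb v hv)
    have hCclosed : IsClosed C := by
      have hCe : C = ⋂ y, {v : EuclideanSpace ℝ (Fin 2) | ⟪x, y⟫ - t * α y ≤ ⟪v, y⟫} := by
        ext v; simp [hC, Set.mem_iInter]
      rw [hCe]
      exact isClosed_iInter fun y =>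
        isClosed_le continuous_const (Continuous.inner continuous_id continuous_const)
    have hCconv : Convex ℝ C := by
      intro v1 h1 v2 h2 a b ha hb hab y
      have e : ⟪a • v1 + b • v2, y⟫ = a * ⟪v1, y⟫ + b * ⟪v2, y⟫ := by
        rw [inner_add_left, real_inner_smul_left, real_inner_smul_left]
      rw [e]
      have hsum : ⟪x, y⟫ - t * α y
          = a * (⟪x, y⟫ - t * α y) + b * (⟪x, y⟫ - t * α y) := by
        rw [← add_mul, hab, one_mul]
      rw [hsum]
      exact add_le_add (mul_le_mul_of_nonneg_left (h1 y) ha)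
        (mul_le_mul_of_nonneg_left (h2 y) hb)
    obtain ⟨p, hpC, hmin⟩ :=
      exists_norm_eq_iInf_of_complete_convex ⟨-w0, hw0'⟩ hCclosed.isComplete hCconv 0
    have hproj := (norm_eq_iInf_iff_real_inner_le_zero hCconv hpC).mp hmin
    obtain ⟨w2, hw2⟩ := subgrad_exists g hgconv hgcont p
    have hw2p : ⟪w2, p⟫ = g p := inner_eq_hom g hghom hw2
    have hw2C : -w2 ∈ C := by
      intro y
      have h1 := hw2 y
      rw [inner_sub_right, hw2p] at h1
      rw [inner_neg_left]
      simp only [hg] at h1 ⊢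
      linarith
    have hp2 : ⟪p, p⟫ ≤ ⟪p, -w2⟫ := by
      have h1 := hproj (-w2) hw2C
      rw [zero_sub, inner_neg_left, inner_sub_right] at h1
      linarith
    have hfp_ge : ‖p‖^2 ≤ ⟪x, p⟫ - t * α p := by
      have e : ⟪p, -w2⟫ = -⟪w2, p⟫ := by rw [inner_neg_right, real_inner_comm]
      rw [e, hw2p] at hp2
      simp only [hg] at hp2
      rw [← real_inner_self_eq_norm_sq]
      linarith
    have hfp_le : ⟪x, p⟫ - t * α p ≤ ‖p‖^2 := by
      have h1 := hpC p
      rw [← real_inner_self_eq_norm_sq]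
      linarith
    have hfp : ⟪x, p⟫ - t * α p = ‖p‖^2 := le_antisymm hfp_le hfp_ge
    have hp1 : 1 ≤ ‖p‖ := hnormge p hpC
    have hppos : (0:ℝ) < ‖p‖ := by linarith
    have hple : ‖p‖ ≤ 1 := by
      have hs : (0:ℝ) < ‖p‖⁻¹ := inv_pos.mpr hppos
      have hmem : ‖p‖ ∈ S := by
        refine ⟨‖p‖⁻¹ • p, ?_, ?_⟩
        · rw [norm_smul, Real.norm_eq_abs, abs_of_pos hs, inv_mul_cancel₀ hppos.ne']
        · rw [real_inner_smul_right, hhom _ hs]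
          have e : ‖p‖⁻¹ * ⟪x, p⟫ - t * (‖p‖⁻¹ * α p) = ‖p‖⁻¹ * (⟪x, p⟫ - t * α p) := by ring
          rw [e, hfp, pow_two, ← mul_assoc, inv_mul_cancel₀ hppos.ne', one_mul]
      calc ‖p‖ ≤ sSup S := le_csSup hbdd hmem
        _ = 1 := hsup
    have hpnorm : ‖p‖ = 1 := le_antisymm hple hp1
    refine ⟨p, t⁻¹ • (x - p), hpnorm, ?_, ?_⟩
    · intro y
      have e : ⟪t⁻¹ • (x - p), y - p⟫
          = t⁻¹ * (⟪x, y⟫ - ⟪x, p⟫ - ⟪p, y⟫ + ⟪p, p⟫) := by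
        rw [real_inner_smul_left, inner_sub_left, inner_sub_right, inner_sub_right]; ring
      have h1 := hpC y
      have h2 : ⟪x, p⟫ - t * α p = ⟪p, p⟫ := by
        rw [hfp, real_inner_self_eq_norm_sq]
      have hA : ⟪x, y⟫ - ⟪x, p⟫ - ⟪p, y⟫ + ⟪p, p⟫ ≤ t * (α y - α p) := by
        have e2 : t * (α y - α p) = t * α y - t * α p := by ring
        linarith
      rw [ge_iff_le, e]
      have h3 : t⁻¹ * (⟪x, y⟫ - ⟪x, p⟫ - ⟪p, y⟫ + ⟪p, p⟫) ≤ t⁻¹ * (t * (α y - α p)) :=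
        mul_le_mul_of_nonneg_left hA (inv_nonneg.mpr ht.le)
      have h4 : t⁻¹ * (t * (α y - α p)) = α y - α p := by
        rw [← mul_assoc, inv_mul_cancel₀ ht.ne', one_mul]
      linarith
    · rw [smul_smul, mul_inv_cancel₀ ht.ne', one_smul]
      abel
  · -- easy direction
    rintro ⟨p, q, hp, hsub, hx⟩
    subst hx
    have hqp : ⟪q, p⟫ = α p := inner_eq_hom α hhom fun y => hsub y
    have hpp : ⟪p, p⟫ = 1 := by
      rw [real_inner_self_eq_norm_sq, hp]; norm_num
    have hmem : (1:ℝ) ∈ S := by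
      refine ⟨p, hp.le, ?_⟩
      rw [inner_add_left, real_inner_smul_left, hpp, hqp]
      ring
    have hub : ∀ y ∈ S, y ≤ 1 := by
      rintro y ⟨p', hp', rfl⟩
      have h1 := hsub p'
      rw [inner_sub_right, hqp] at h1
      have h2 : ⟪p + t • q, p'⟫ = ⟪p, p'⟫ + t * ⟪q, p'⟫ := by
        rw [inner_add_left, real_inner_smul_left]
      have h3 : ⟪p, p'⟫ ≤ 1 := by
        have := real_inner_le_norm p p'
        rw [hp, one_mul] at this
        linarith
      rw [h2]
      nlinarith
    exact IsGreatest.csSup_eq ⟨hmem, hub⟩
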